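/- For any vector u ∈ X⊗Z and any channel Φ ∈ C(X,Y), writing σ = (Φ⊗id_Z)(uu*), the probability ⟨vv*, σ⟩ for any unit vector v ∈ Y⊗Z satisfies ⟨vv*,σ⟩ ≤ F(Tr_Y(vv*), Tr_X(uu*))², where F denotes fidelity. -/

import Mathlib

open Matrix
open scoped Kronecker ComplexOrder

noncomputable section

/-- `Φ ⊗ id` : apply a linear map `Φ` on `L(X)` to the first tensor factor of `L(X ⊗ Z)`. -/
def lmapTensorId {n m k : Type*} [Fintype n] [Fintype k]
    (Φ : Matrix n n ℂ →ₗ[ℂ] Matrix m m ℂ)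
    (M : Matrix (n × k) (n × k) ℂ) : Matrix (m × k) (m × k) ℂ :=
  fun p q => Φ (fun i j => M (i, p.2) (j, q.2)) p.1 q.1

/-- `id ⊗ Ψ` : apply a linear map `Ψ` on `L(Z)` to the second tensor factor of `L(Y ⊗ Z)`. -/
def idTensorLmap {n k l : Type*} [Fintype n] [Fintype k]
    (Ψ : Matrix k k ℂ →ₗ[ℂ] Matrix l l ℂ)
    (M : Matrix (n × k) (n × k) ℂ) : Matrix (n × l) (n × l) ℂ :=
  fun p q => Ψ (fun a b => M (p.1, a) (q.1, b)) p.2 q.2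

/-- Complete positivity: `Φ ⊗ id_k` maps positive semidefinite operators to positive
semidefinite operators for every finite-dimensional ancilla `k`. -/
def IsCompletelyPositive {n m : Type*} [Fintype n] [Fintype m]
    (Φ : Matrix n n ℂ →ₗ[ℂ] Matrix m m ℂ) : Prop :=
  ∀ (k : Type) [Fintype k] [DecidableEq k],
    ∀ M : Matrix (n × k) (n × k) ℂ, M.PosSemidef → (lmapTensorId Φ M).PosSemidef

def IsTracePreserving {n m : Type*} [Fintype n] [Fintype m]
    (Φ : Matrix n n ℂ →ₗ[ℂ] Matrix m m ℂ) : Prop :=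
  ∀ M : Matrix n n ℂ, (Φ M).trace = M.trace

/-- Partial trace over the first tensor factor. -/
def trFst {n k : Type*} [Fintype n] (M : Matrix (n × k) (n × k) ℂ) : Matrix k k ℂ :=
  fun a b => ∑ i : n, M (i, a) (i, b)

/-- Partial trace over the second tensor factor. -/
def trSnd {n k : Type*} [Fintype k] (M : Matrix (n × k) (n × k) ℂ) : Matrix n n ℂ :=
  fun i j => ∑ a : k, M (i, a) (j, a)

/-- Hilbert-Schmidt inner product `⟨A, B⟩ = Tr(A* B)`. -/
def minner {n : Type*} [Fintype n] (A B : Matrix n n ℂ) : ℂ := (Aᴴ * B).trace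

open Classical in
/-- Square root of a positive semidefinite matrix (junk value `0` otherwise). -/
def msqrt {n : Type*} [Fintype n] [DecidableEq n] (M : Matrix n n ℂ) : Matrix n n ℂ :=
  if h : M.PosSemidef then
    (h.1.eigenvectorUnitary : Matrix n n ℂ) * diagonal ((↑) ∘ (√·) ∘ h.1.eigenvalues) *
      (star h.1.eigenvectorUnitary : Matrix n n ℂ) else 0

/-- Trace norm `‖M‖₁ = Tr √(M* M)`. -/
def traceNorm {n : Type*} [Fintype n] [DecidableEq n] (M : Matrix n n ℂ) : ℝ :=
  (((Matrix.posSemidef_conjTranspose_mul_self M).1.eigenvectorUnitary : Matrix n n ℂ) *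
    diagonal (((↑) : ℝ → ℂ) ∘ (√·) ∘ (Matrix.posSemidef_conjTranspose_mul_self M).1.eigenvalues) *
    (star (Matrix.posSemidef_conjTranspose_mul_self M).1.eigenvectorUnitary : Matrix n n ℂ)).trace.re

/-- Fidelity `F(Q, R) = ‖√Q √R‖₁` of positive semidefinite matrices. -/
def fid {n : Type*} [Fintype n] [DecidableEq n] (Q R : Matrix n n ℂ) : ℝ :=
  traceNorm (msqrt Q * msqrt R)

/-- Choi-Jamiolkowski operator `J(Φ) = Σ_{i,j} Φ(|i⟩⟨j|) ⊗ |i⟩⟨j|`. -/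
def choi {n m : Type*} [Fintype n] [DecidableEq n] [Fintype m]
    (Φ : Matrix n n ℂ →ₗ[ℂ] Matrix m m ℂ) : Matrix (m × n) (m × n) ℂ :=
  fun p q => Φ (Matrix.single p.2 q.2 1) p.1 q.1

/-- Tensor product of vectors. -/
def tensorVec {α β : Type*} (v : α → ℂ) (w : β → ℂ) : α × β → ℂ := fun p => v p.1 * w p.2

/-- `u = (|00⟩ + |11⟩)/√2`. -/
def uVec : Fin 2 × Fin 2 → ℂ := fun p =>
  if p = (0, 0) then (Real.sqrt 2 : ℂ)⁻¹ else if p = (1, 1) then (Real.sqrt 2 : ℂ)⁻¹ else 0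

/-- `v = cos(π/8)|00⟩ + sin(π/8)|11⟩`. -/
def vVec : Fin 2 × Fin 2 → ℂ := fun p =>
  if p = (0, 0) then (Real.cos (Real.pi / 8) : ℂ)
  else if p = (1, 1) then (Real.sin (Real.pi / 8) : ℂ) else 0

/-- `w = -sin(π/8)|00⟩ + cos(π/8)|11⟩`. -/
def wVec : Fin 2 × Fin 2 → ℂ := fun p =>
  if p = (0, 0) then -(Real.sin (Real.pi / 8) : ℂ)
  else if p = (1, 1) then (Real.cos (Real.pi / 8) : ℂ) else 0


namespace StmtAux

variable {N : Type*} [Fintype N] [DecidableEq N]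

lemma spec' {M : Matrix N N ℂ} (hH : M.IsHermitian) :
    M = (hH.eigenvectorUnitary : Matrix N N ℂ) * diagonal (fun i => (hH.eigenvalues i : ℂ)) *
      (star hH.eigenvectorUnitary : Matrix N N ℂ) := by
  conv_lhs => rw [hH.spectral_theorem]
  simp [Unitary.conjStarAlgAut_apply]
  rfl

def psdSqrt {M : Matrix N N ℂ} (hM : M.PosSemidef) : Matrix N N ℂ :=
  (hM.1.eigenvectorUnitary : Matrix N N ℂ) * diagonal ((↑) ∘ (√·) ∘ hM.1.eigenvalues) *
      (star hM.1.eigenvectorUnitary : Matrix N N ℂ)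

lemma psdSqrt_posSemidef {M : Matrix N N ℂ} (hM : M.PosSemidef) : (psdSqrt hM).PosSemidef := by
  unfold psdSqrt
  rw [Matrix.star_eq_conjTranspose]
  apply PosSemidef.mul_mul_conjTranspose_same
  rw [posSemidef_diagonal_iff]
  intro i
  simp [Real.sqrt_nonneg]

lemma psdSqrt_mul_self {M : Matrix N N ℂ} (hM : M.PosSemidef) : psdSqrt hM * psdSqrt hM = M := by
  unfold psdSqrt
  have hUU : (star hM.1.eigenvectorUnitary : Matrix N N ℂ) * (hM.1.eigenvectorUnitary : Matrix N N ℂ) = 1 :=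
    Unitary.coe_star_mul_self _
  conv_rhs => rw [spec' hM.1]
  simp only [Matrix.mul_assoc]
  rw [← Matrix.mul_assoc _ (hM.1.eigenvectorUnitary : Matrix N N ℂ), hUU, Matrix.one_mul,
    ← Matrix.mul_assoc (diagonal _), diagonal_mul_diagonal]
  congr 3
  funext i
  simp only [Function.comp]
  rw [← Complex.ofReal_mul, Real.mul_self_sqrt (hM.eigenvalues_nonneg i)]

lemma posSemidef_one_sub_of_idem {E : Matrix N N ℂ} (hE : Eᴴ = E) (h2 : E * E = E) :
    (1 - E).PosSemidef := by
  have h : (1 - E)ᴴ * (1 - E) = 1 - E := by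
    rw [conjTranspose_sub, conjTranspose_one, hE, sub_mul, mul_sub, mul_sub, h2]
    simp [sub_sub_eq_add_sub]
  rw [← h]
  exact posSemidef_conjTranspose_mul_self _

lemma exists_factor {d : Type*} [Fintype d] [DecidableEq d] {X : Matrix N N ℂ} (hX : X.PosSemidef)
    (A : Matrix N d ℂ) (hA : A * Aᴴ = X * X) :
    ∃ C : Matrix N d ℂ, A = X * C ∧ (1 - Cᴴ * C).PosSemidef ∧ (1 - C * Cᴴ).PosSemidef := by
  have hH := hX.1
  set U : Matrix N N ℂ := (hH.eigenvectorUnitary : Matrix N N ℂ) with hUdef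
  have hUU : star U * U = 1 := Unitary.coe_star_mul_self hH.eigenvectorUnitary
  set P : (N → ℝ) → Matrix N N ℂ := fun f => U * diagonal (fun i => (f i : ℂ)) * star U with hP
  have hPmul : ∀ f g, P f * P g = P (fun i => f i * g i) := by
    intro f g
    simp only [hP, Matrix.mul_assoc]
    rw [← Matrix.mul_assoc (star U) U, hUU, Matrix.one_mul,
      ← Matrix.mul_assoc (diagonal _) (diagonal _), diagonal_mul_diagonal]
    congr 2
    push_cast
    rfl
  have hPherm : ∀ f, (P f)ᴴ = P f := by
    intro f
    have hst : (star fun i => ((f i : ℝ) : ℂ)) = fun i => ((f i : ℝ) : ℂ) := by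
      funext i; simp
    simp only [hP, conjTranspose_mul, conjTranspose_conjTranspose, diagonal_conjTranspose, hst, Matrix.star_eq_conjTranspose,
      Matrix.mul_assoc]
  set ev : N → ℝ := hH.eigenvalues with hev
  have hXP : X = P ev := spec' hH
  have hPmul' : ∀ (f g : N → ℝ) (Z : Matrix N d ℂ),
      P f * (P g * Z) = P (fun i => f i * g i) * Z := by
    intro f g Z; rw [← Matrix.mul_assoc, hPmul]
  set iv : N → ℝ := fun i => (ev i)⁻¹ with hiv
  set C : Matrix N d ℂ := P iv * A with hC
  have hind : ∀ r : ℝ, r * (r⁻¹ * r) = r := by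
    intro r; rcases eq_or_ne r 0 with h | h <;> field_simp [h]
  -- (1 - Π) * X = 0 where Π = P (ev * iv)
  have hPiX : P (fun i => ev i * iv i) * X = X := by
    have harg : (fun i => ev i * iv i * ev i) = ev := by
      funext i; simpa [mul_assoc] using hind (ev i)
    rw [hXP, hPmul, harg]
  have hzero : (1 - P (fun i => ev i * iv i)) * A = 0 := by
    have h0 : ((1 - P (fun i => ev i * iv i)) * A) * ((1 - P (fun i => ev i * iv i)) * A)ᴴ
        = 0 := by
      have hsub : (1 - P (fun i => ev i * iv i))ᴴ = 1 - P (fun i => ev i * iv i) := by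
        rw [conjTranspose_sub, conjTranspose_one, hPherm]
      rw [conjTranspose_mul, hsub, Matrix.mul_assoc, ← Matrix.mul_assoc A Aᴴ, hA]
      have : (1 - P (fun i => ev i * iv i)) * (X * X) = 0 := by
        rw [Matrix.sub_mul, Matrix.one_mul, ← Matrix.mul_assoc, hPiX, sub_self]
      rw [← Matrix.mul_assoc, this, Matrix.zero_mul]
    have := Matrix.self_mul_conjTranspose_eq_zero.mp h0
    exact this
  have hPiA : P (fun i => ev i * iv i) * A = A := by
    exact (sub_eq_zero.mp (by simpa [Matrix.sub_mul] using hzero)).symm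
  have hCt : Cᴴ = Aᴴ * P iv := by rw [hC, conjTranspose_mul, hPherm]
  refine ⟨C, ?_, ?_, ?_⟩
  · rw [hC, hXP, hPmul']
    exact hPiA.symm
  · -- 1 - Cᴴ * C
    have hYXXY : P (fun i => iv i * iv i) * (X * X) * P (fun i => iv i * iv i)
        = P (fun i => iv i * iv i) := by
      rw [hXP, hPmul, hPmul, hPmul]
      have harg : (fun i => iv i * iv i * (ev i * ev i) * (iv i * iv i))
          = fun i => iv i * iv i := by
        funext i
        rcases eq_or_ne (ev i) 0 with h | h <;> simp only [hiv] <;> field_simp [h]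
      rw [harg]
    have hF : Cᴴ * C = Aᴴ * P (fun i => iv i * iv i) * A := by
      rw [hCt, hC, Matrix.mul_assoc, ← Matrix.mul_assoc (P iv), hPmul, ← Matrix.mul_assoc]
    rw [hF]
    apply posSemidef_one_sub_of_idem
    · simp only [conjTranspose_mul, conjTranspose_conjTranspose, hPherm, Matrix.mul_assoc]
    · have h1 : (Aᴴ * P (fun i => iv i * iv i) * A) * (Aᴴ * P (fun i => iv i * iv i) * A)
          = Aᴴ * (P (fun i => iv i * iv i) * (A * Aᴴ) * P (fun i => iv i * iv i)) * A := by
        simp only [Matrix.mul_assoc]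
      rw [h1, hA, hYXXY]
  · -- 1 - C * Cᴴ
    have hE : C * Cᴴ = P (fun i => iv i * (ev i * ev i) * iv i) := by
      rw [hC, hCt]
      have h1 : P iv * A * (Aᴴ * P iv) = P iv * (A * Aᴴ) * P iv := by
        simp only [Matrix.mul_assoc]
      rw [h1, hA, hXP, hPmul, hPmul, hPmul]
    rw [hE]
    apply posSemidef_one_sub_of_idem
    · exact hPherm _
    · rw [hPmul]
      congr 1
      funext i
      rcases eq_or_ne (ev i) 0 with h | h <;> simp only [hiv] <;> field_simp [h]


lemma dotProduct_norm_le {x y : N → ℂ} :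
    ‖dotProduct (star x) y‖ ^ 2 ≤ (dotProduct (star x) x).re * (dotProduct (star y) y).re := by
  let x' : EuclideanSpace ℂ N := WithLp.toLp 2 x
  let y' : EuclideanSpace ℂ N := WithLp.toLp 2 y
  have hinner : (inner ℂ x' y' : ℂ) = dotProduct (star x) y := by
    simp [EuclideanSpace.inner_eq_star_dotProduct, dotProduct, x', y', mul_comm]
  have hx : (dotProduct (star x) x).re = ‖x'‖ ^ 2 := by
    have := @inner_self_eq_norm_sq ℂ _ _ _ _ x'
    rw [← this]
    have h2 : (inner ℂ x' x' : ℂ) = dotProduct (star x) x := by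
      rw [EuclideanSpace.inner_eq_star_dotProduct, dotProduct_comm]
    rw [← h2]
    rfl
  have hy : (dotProduct (star y) y).re = ‖y'‖ ^ 2 := by
    have := @inner_self_eq_norm_sq ℂ _ _ _ _ y'
    rw [← this]
    have h2 : (inner ℂ y' y' : ℂ) = dotProduct (star y) y := by
      rw [EuclideanSpace.inner_eq_star_dotProduct, dotProduct_comm]
    rw [← h2]
    rfl
  rw [hx, hy, ← hinner]
  calc ‖(inner ℂ x' y' : ℂ)‖ ^ 2 ≤ (‖x'‖ * ‖y'‖) ^ 2 := by
        have := norm_inner_le_norm (𝕜 := ℂ) x' y'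
        exact pow_le_pow_left₀ (norm_nonneg _) this 2
    _ = ‖x'‖ ^ 2 * ‖y'‖ ^ 2 := by ring

lemma trace_mul_contraction_le {T L : Matrix N N ℂ} (hT : T.PosSemidef)
    (hL : (1 - Lᴴ * L).PosSemidef) : ((T * L).trace).re ≤ T.trace.re := by
  have hH := hT.1
  set U : Matrix N N ℂ := (hH.eigenvectorUnitary : Matrix N N ℂ) with hUdef
  have hUU : star U * U = 1 := Unitary.coe_star_mul_self hH.eigenvectorUnitary
  set ev : N → ℝ := hH.eigenvalues with hev
  have hXP : T = U * diagonal (fun i => (ev i : ℂ)) * star U := spec' hH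
  have htr : T.trace = ∑ i, (ev i : ℂ) := by
    rw [hXP, Matrix.trace_mul_cycle, hUU, Matrix.one_mul, Matrix.trace_diagonal]
  have htrL : (T * L).trace = ∑ i, (star U * L * U) i i * (ev i : ℂ) := by
    rw [hXP, Matrix.trace_mul_cycle, Matrix.trace_mul_cycle, ← Matrix.mul_assoc]
    simp [Matrix.trace, Matrix.diag, Matrix.mul_diagonal]
  have hbound : ∀ i, ‖(star U * L * U) i i‖ ≤ 1 := by
    intro i
    set x : N → ℂ := fun p => U p i with hx
    have hentry : (star U * L * U) i i = dotProduct (star x) (L *ᵥ x) := by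
      simp only [Matrix.mul_apply, Matrix.mulVec, dotProduct, Finset.sum_mul, Finset.mul_sum]
      rw [Finset.sum_comm]
      refine Finset.sum_congr rfl fun p _ => Finset.sum_congr rfl fun q _ => ?_
      simp [hx, Matrix.star_apply, mul_assoc]
    have hxx : dotProduct (star x) x = 1 := by
      have h1 : (star U * U) i i = dotProduct (star x) x := by
        simp [Matrix.mul_apply, dotProduct, hx, Matrix.star_apply]
      rw [hUU] at h1
      rw [← h1, Matrix.one_apply_eq]
    have hLxx : (dotProduct (star (L *ᵥ x)) (L *ᵥ x)).re ≤ 1 := by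
      have h0 : 0 ≤ RCLike.re (star x ⬝ᵥ ((1 - Lᴴ * L) *ᵥ x)) :=
          (RCLike.nonneg_iff.mp (hL.dotProduct_mulVec_nonneg x)).1
      have h1 : dotProduct (star x) ((1 - Lᴴ * L) *ᵥ x)
          = 1 - dotProduct (star (L *ᵥ x)) (L *ᵥ x) := by
        rw [Matrix.sub_mulVec, dotProduct_sub, Matrix.one_mulVec, hxx,
          Matrix.star_mulVec, Matrix.dotProduct_mulVec, ← Matrix.vecMul_vecMul]
        rw [show Lᴴ = Lᴴ from rfl]
        congr 1
        rw [← Matrix.dotProduct_mulVec, ← Matrix.dotProduct_mulVec, Matrix.mulVec_mulVec]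
      rw [h1, map_sub, RCLike.one_re] at h0
      simp only [RCLike.re_to_complex] at h0
      linarith
    have hCS := dotProduct_norm_le (x := x) (y := L *ᵥ x)
    rw [hxx] at hCS
    simp only [Complex.one_re, one_mul] at hCS
    have hnn : (0:ℝ) ≤ ‖dotProduct (star x) (L *ᵥ x)‖ := norm_nonneg _
    rw [hentry]
    nlinarith [hCS, hLxx]
  rw [htr, htrL, Complex.re_sum, Complex.re_sum]
  refine Finset.sum_le_sum fun i _ => ?_
  have hev0 : 0 ≤ ev i := hT.eigenvalues_nonneg i
  have hre : ((star U * L * U) i i * (ev i : ℂ)).re = ((star U * L * U) i i).re * ev i := by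
    simp [Complex.mul_re]
  rw [hre]
  have h1 : ((star U * L * U) i i).re ≤ 1 :=
    le_trans (Complex.re_le_norm _) (hbound i)
  have : ((ev i : ℂ)).re = ev i := rfl
  rw [this]
  nlinarith [h1, hev0]


end StmtAux

namespace StmtAux

variable {N : Type*} [Fintype N] [DecidableEq N]

lemma msqrt_eq {M : Matrix N N ℂ} (hM : M.PosSemidef) : msqrt M = psdSqrt hM := by
  rw [msqrt, dif_pos hM]; rfl

lemma re_trace_le_fid {d : Type*} [Fintype d] [DecidableEq d] (A B : Matrix N d ℂ) :
    ((Aᴴ * B).trace).re ≤ fid (A * Aᴴ) (B * Bᴴ) := by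
  have hP : (A * Aᴴ).PosSemidef := posSemidef_self_mul_conjTranspose A
  have hR : (B * Bᴴ).PosSemidef := posSemidef_self_mul_conjTranspose B
  set X : Matrix N N ℂ := msqrt (A * Aᴴ) with hXdef
  set Y : Matrix N N ℂ := msqrt (B * Bᴴ) with hYdef
  have hXps : X.PosSemidef := by rw [hXdef, msqrt_eq hP]; exact psdSqrt_posSemidef hP
  have hYps : Y.PosSemidef := by rw [hYdef, msqrt_eq hR]; exact psdSqrt_posSemidef hR
  have hXX : X * X = A * Aᴴ := by rw [hXdef, msqrt_eq hP]; exact psdSqrt_mul_self hP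
  have hYY : Y * Y = B * Bᴴ := by rw [hYdef, msqrt_eq hR]; exact psdSqrt_mul_self hR
  obtain ⟨C, hAC, hC1, hC2⟩ := exists_factor hXps A hXX.symm
  obtain ⟨D, hBD, hD1, hD2⟩ := exists_factor hYps B hYY.symm
  set M : Matrix N N ℂ := X * Y with hMdef
  have hQ : (Mᴴ * M).PosSemidef := posSemidef_conjTranspose_mul_self M
  set Z : Matrix N N ℂ := psdSqrt (posSemidef_conjTranspose_mul_self M) with hZdef
  have hZps : Z.PosSemidef := psdSqrt_posSemidef hQ
  have hZZ : Mᴴ * (Mᴴ)ᴴ = Z * Z := by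
    rw [conjTranspose_conjTranspose, hZdef, psdSqrt_mul_self hQ]
  obtain ⟨E, hME, hE1, hE2⟩ := exists_factor hZps Mᴴ hZZ
  have hM : M = Eᴴ * Z := by
    rw [← conjTranspose_conjTranspose M, hME, conjTranspose_mul, hZps.1]
  -- rewrite the trace
  have htr : (Aᴴ * B).trace = (Z * (D * (Cᴴ * Eᴴ))).trace := by
    have h1 : Aᴴ * B = (Cᴴ * Eᴴ) * (Z * D) := by
      rw [hAC, hBD, conjTranspose_mul, hXps.1]
      have : Cᴴ * X * (Y * D) = Cᴴ * M * D := by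
        rw [hMdef]; simp only [Matrix.mul_assoc]
      rw [this, hM]
      simp only [Matrix.mul_assoc]
    rw [h1, Matrix.trace_mul_comm]
    simp only [Matrix.mul_assoc]
  -- the contraction
  set Lm : Matrix N N ℂ := D * (Cᴴ * Eᴴ) with hLmdef
  have hLm : (1 - Lmᴴ * Lm).PosSemidef := by
    have hid : 1 - Lmᴴ * Lm
        = (E * C) * (1 - Dᴴ * D) * (E * C)ᴴ + (E * (1 - C * Cᴴ) * Eᴴ + (1 - E * Eᴴ)) := by
      rw [hLmdef]
      simp only [conjTranspose_mul, conjTranspose_conjTranspose, Matrix.sub_mul,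
        Matrix.mul_sub, Matrix.one_mul, Matrix.mul_one, Matrix.mul_assoc]
      abel
    rw [hid]
    exact ((hD1.mul_mul_conjTranspose_same (E * C)).add
      ((hC2.mul_mul_conjTranspose_same E).add hE2))
  have hfin := trace_mul_contraction_le hZps hLm
  rw [htr]
  exact le_trans hfin (le_of_eq rfl)

lemma posSemidef_vecMulVec {ι : Type*} [Fintype ι] (w : ι → ℂ) :
    (vecMulVec w (star w)).PosSemidef := by
  exact posSemidef_vecMulVec_self_star w
  /- · intro x
    have hkey : dotProduct (star x) (vecMulVec w (star w) *ᵥ x)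
        = star (dotProduct (star w) x) * (dotProduct (star w) x) := by
      simp only [dotProduct, Matrix.mulVec, vecMulVec, Pi.star_apply, star_sum, star_mul',
        RCLike.star_def, Finset.mul_sum, Finset.sum_mul]
      rw [Finset.sum_comm]
      refine Finset.sum_congr rfl fun i _ => Finset.sum_congr rfl fun j _ => ?_
      simp [mul_comm, mul_left_comm, mul_assoc]
    rw [hkey]
    exact star_mul_self_nonneg _ -/

end StmtAux

/-- For any vector `u ∈ X ⊗ Z`, unit vector `v ∈ Y ⊗ Z`, and channel `Φ ∈ C(X, Y)`, with
`σ = (Φ ⊗ id)(uu*)`, one has `⟨vv*, σ⟩ ≤ F(Tr_Y(vv*), Tr_X(uu*))²`. -/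
theorem stmt19 {n m k : Type*} [Fintype n] [DecidableEq n] [Fintype m] [DecidableEq m]
    [Fintype k] [DecidableEq k]
    (u : n × k → ℂ) (v : m × k → ℂ) (hv : star v ⬝ᵥ v = 1)
    (Φ : Matrix n n ℂ →ₗ[ℂ] Matrix m m ℂ)
    (hCP : IsCompletelyPositive Φ) (hTP : IsTracePreserving Φ) :
    (minner (vecMulVec v (star v)) (lmapTensorId Φ (vecMulVec u (star u)))).re ≤
      fid (trFst (vecMulVec v (star v))) (trFst (vecMulVec u (star u))) ^ 2 := by
  classical
  set Mu : Matrix (n × k) (n × k) ℂ := vecMulVec u (star u) with hMu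
  set σ : Matrix (m × k) (m × k) ℂ := lmapTensorId Φ Mu with hσdef
  -- σ is positive semidefinite (transfer ancilla to `Type 0`)
  have hσ : σ.PosSemidef := by
    obtain ⟨N0, ⟨e⟩⟩ : ∃ N0 : ℕ, Nonempty (k ≃ Fin N0) :=
      ⟨Fintype.card k, ⟨Fintype.equivFin k⟩⟩
    set u' : n × Fin N0 → ℂ := fun p => u (p.1, e.symm p.2) with hu'
    have hps : (lmapTensorId Φ (vecMulVec u' (star u'))).PosSemidef :=
      hCP (Fin N0) _ (StmtAux.posSemidef_vecMulVec u')
    have heq : σ = (lmapTensorId Φ (vecMulVec u' (star u'))).submatrix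
        (fun p : m × k => (p.1, e p.2)) (fun p : m × k => (p.1, e p.2)) := by
      ext p q
      have harg : (fun i j => Mu (i, p.2) (j, q.2))
          = (fun i j => vecMulVec u' (star u') (i, e p.2) (j, e q.2)) := by
        funext i j
        simp [hMu, hu', vecMulVec]
      simp only [hσdef, lmapTensorId, Matrix.submatrix_apply, harg]
    rw [heq]
    exact hps.submatrix _
  -- the partial trace of σ equals that of uu*
  have hTrσ : trFst σ = trFst Mu := by
    ext a b
    have h1 := hTP (fun i j => Mu (i, a) (j, b))
    simpa [Matrix.trace, Matrix.diag, lmapTensorId, hσdef, trFst] using h1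
  -- ⟨vv*, σ⟩ = v* σ v
  set s : ℂ := dotProduct (star v) (σ *ᵥ v) with hsdef
  have hs : minner (vecMulVec v (star v)) σ = s := by
    rw [minner, (StmtAux.posSemidef_vecMulVec v).1, hsdef]
    simp only [Matrix.trace, Matrix.diag, Matrix.mul_apply, Matrix.vecMulVec_apply,
      dotProduct, Matrix.mulVec, Finset.mul_sum]
    rw [Finset.sum_comm]
    refine Finset.sum_congr rfl fun q _ => Finset.sum_congr rfl fun p _ => ?_
    ring
  -- square root of σ
  set G : Matrix (m × k) (m × k) ℂ := StmtAux.psdSqrt hσ with hGdef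
  have hGps : G.PosSemidef := StmtAux.psdSqrt_posSemidef hσ
  have hGh : Gᴴ = G := hGps.1
  have hGG : G * G = σ := StmtAux.psdSqrt_mul_self hσ
  have hσGG : σ = G * Gᴴ := by rw [hGh, hGG]
  set c' : (m × k) → ℂ := fun l => ∑ q, (star v) q * G q l with hc'
  have hwv : ∀ l, (Gᴴ *ᵥ v) l = (starRingEnd ℂ) (c' l) := by
    intro l
    rw [hc']
    simp only [Matrix.mulVec, Matrix.conjTranspose_apply, dotProduct, map_sum, _root_.map_mul,
      Pi.star_apply, RCLike.star_def, Complex.conj_conj]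
    refine Finset.sum_congr rfl fun q _ => ?_
    ring
  have hsum : s = ∑ l, c' l * (starRingEnd ℂ) (c' l) := by
    rw [hsdef, hσGG, ← Matrix.mulVec_mulVec, Matrix.dotProduct_mulVec]
    refine Finset.sum_congr rfl fun l _ => ?_
    rw [hwv l]
    congr 1
  set S : ℝ := s.re with hS
  have hsS : s = (S : ℂ) := by
    have h1 : s = ((∑ l, Complex.normSq (c' l) : ℝ) : ℂ) := by
      rw [hsum]
      push_cast
      exact Finset.sum_congr rfl fun l _ => (Complex.mul_conj _)
    rw [hS, h1]
    simp
  have hSnn : 0 ≤ S := by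
    have h1 : s = ((∑ l, Complex.normSq (c' l) : ℝ) : ℂ) := by
      rw [hsum]
      push_cast
      exact Finset.sum_congr rfl fun l _ => (Complex.mul_conj _)
    have : S = ∑ l, Complex.normSq (c' l) := by
      rw [hS, h1]; simp
    rw [this]
    exact Finset.sum_nonneg fun l _ => Complex.normSq_nonneg _
  rw [hs]
  by_cases hS0 : S = 0
  · rw [show s.re = S from rfl, hS0]
    exact sq_nonneg _
  have hSpos : 0 < S := lt_of_le_of_ne hSnn (Ne.symm hS0)
  set rS : ℝ := Real.sqrt S with hrS
  have hrSnn : 0 ≤ rS := Real.sqrt_nonneg S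
  have hrS2 : rS * rS = S := Real.mul_self_sqrt hSnn
  set B : Matrix k (m × (m × k)) ℂ := fun a il => G (il.1, a) il.2 with hB
  set A' : Matrix k (m × (m × k)) ℂ := fun a il => (c' il.2 / (rS : ℂ)) * v (il.1, a) with hA'
  have hBB : B * Bᴴ = trFst Mu := by
    rw [← hTrσ, hσGG]
    ext a b
    simp only [Matrix.mul_apply, Matrix.conjTranspose_apply]
    simp only [Matrix.mul_apply, Matrix.conjTranspose_apply, trFst, hB,
      Fintype.sum_prod_type]
  have hone : (∑ l, (c' l / (rS : ℂ)) * (starRingEnd ℂ) (c' l / (rS : ℂ))) = 1 := by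
    have hterm : ∀ l, (c' l / (rS : ℂ)) * (starRingEnd ℂ) (c' l / (rS : ℂ))
        = (c' l * (starRingEnd ℂ) (c' l)) / ((rS : ℂ) * (rS : ℂ)) := by
      intro l
      rw [map_div₀, Complex.conj_ofReal]
      ring
    rw [Finset.sum_congr rfl fun l _ => hterm l, ← Finset.sum_div, ← hsum, hsS]
    have h2 : (rS : ℂ) * (rS : ℂ) = (S : ℂ) := by
      rw [← Complex.ofReal_mul, hrS2]
    rw [h2, div_self]
    exact_mod_cast hS0
  have hAA : A' * A'ᴴ = trFst (vecMulVec v (star v)) := by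
    ext a b
    have h1 : (A' * A'ᴴ) a b
        = (∑ l, (c' l / (rS : ℂ)) * (starRingEnd ℂ) (c' l / (rS : ℂ)))
          * (∑ i, v (i, a) * (starRingEnd ℂ) (v (i, b))) := by
      rw [Matrix.mul_apply, Fintype.sum_prod_type, Finset.sum_mul_sum, Finset.sum_comm]
      refine Finset.sum_congr rfl fun l _ => Finset.sum_congr rfl fun i _ => ?_
      simp only [Matrix.conjTranspose_apply]
      simp only [Matrix.conjTranspose_apply, hA', _root_.map_mul, RCLike.star_def]
      ring
    rw [h1, hone, one_mul]
    simp only [trFst, Matrix.vecMulVec_apply, Pi.star_apply, RCLike.star_def]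
  have htrAB : (A'ᴴ * B).trace = ∑ l, ((starRingEnd ℂ) (c' l) * c' l) / (rS : ℂ) := by
    rw [Matrix.trace]
    simp only [Matrix.diag, Matrix.mul_apply]
    rw [Fintype.sum_prod_type, Finset.sum_comm]
    refine Finset.sum_congr rfl fun l _ => ?_
    have hexp : c' l = ∑ i, ∑ a, (star v) (i, a) * G (i, a) l := by
      simp only [hc']
      rw [Fintype.sum_prod_type]
    nth_rewrite 2 [hexp]
    rw [Finset.mul_sum, Finset.sum_div]
    refine Finset.sum_congr rfl fun i _ => ?_
    rw [Finset.mul_sum, Finset.sum_div]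
    refine Finset.sum_congr rfl fun a _ => ?_
    simp only [Matrix.conjTranspose_apply]
    simp only [Matrix.conjTranspose_apply, hA', hB, _root_.map_mul, map_div₀, Complex.conj_ofReal,
      Pi.star_apply, RCLike.star_def]
    ring
  have key := StmtAux.re_trace_le_fid A' B
  rw [hAA, hBB, htrAB] at key
  have htrval : (∑ l, ((starRingEnd ℂ) (c' l) * c' l) / (rS : ℂ)) = ((S / rS : ℝ) : ℂ) := by
    rw [← Finset.sum_div]
    have : (∑ l, (starRingEnd ℂ) (c' l) * c' l) = (S : ℂ) := by
      rw [← hsS, hsum]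
      exact Finset.sum_congr rfl fun l _ => (mul_comm _ _)
    rw [this]
    push_cast
    ring
  rw [htrval] at key
  have hkey2 : Real.sqrt S ≤ fid (trFst (vecMulVec v (star v))) (trFst Mu) := by
    have : ((S / rS : ℝ) : ℂ).re = Real.sqrt S := by
      rw [Complex.ofReal_re, hrS, Real.div_sqrt]
    rw [this] at key
    exact key
  have hfinal : S ≤ fid (trFst (vecMulVec v (star v))) (trFst Mu) ^ 2 := by
    calc S = Real.sqrt S ^ 2 := (Real.sq_sqrt hSnn).symm
      _ ≤ _ := by
          apply pow_le_pow_left₀ (Real.sqrt_nonneg S) hkey2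
  exact hfinal

end
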